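/- Fix μ > 0 and 0 < c < c*(μ). Let t_{c*} = log((sinh μ / μ)(1 - √(1 - μ²/sinh²μ))) and let t_c be the unique zero of h_c(t) = e^{2t}(t + cμ² - 1) + t + cμ² + 1. Then t_{c*} < t_c < 0; equivalently, the free boundary b_c = (t_c + μ)/(2μ) satisfies b_{c*} < b_c < 1/2, where b_{c*} = (t_{c*} + μ)/(2μ). -/

import Mathlib

set_option maxHeartbeats 1000000


theorem stmt_13 (μ c cstar : ℝ) (hμ : 0 < μ)
    (hcs : cstar = -(1 / μ ^ 2) *
      (Real.log ((Real.sinh μ / μ) * (1 - Real.sqrt (1 - μ ^ 2 / Real.sinh μ ^ 2)))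
        + Real.sqrt (1 - μ ^ 2 / Real.sinh μ ^ 2)))
    (hc : 0 < c) (hcc : c < cstar)
    (tcstar : ℝ)
    (htcs : tcstar = Real.log ((Real.sinh μ / μ) * (1 - Real.sqrt (1 - μ ^ 2 / Real.sinh μ ^ 2))))
    (tc : ℝ)
    (htc : Real.exp (2 * tc) * (tc + c * μ ^ 2 - 1) + tc + c * μ ^ 2 + 1 = 0)
    (huniq : ∀ s : ℝ, Real.exp (2 * s) * (s + c * μ ^ 2 - 1) + s + c * μ ^ 2 + 1 = 0 → s = tc) :
    (tcstar < tc ∧ tc < 0) ∧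
    ((tcstar + μ) / (2 * μ) < (tc + μ) / (2 * μ) ∧ (tc + μ) / (2 * μ) < 1 / 2) := by
  have hμ2 : (0:ℝ) < μ ^ 2 := by positivity
  have hsinh : μ < Real.sinh μ := Real.self_lt_sinh_iff.mpr hμ
  have hs0 : 0 < Real.sinh μ := lt_trans hμ hsinh
  set r : ℝ := Real.sqrt (1 - μ ^ 2 / Real.sinh μ ^ 2) with hrdef
  have harg : 0 < 1 - μ ^ 2 / Real.sinh μ ^ 2 := by
    rw [sub_pos, div_lt_one (by positivity)]
    nlinarith
  have hr2 : r ^ 2 = 1 - μ ^ 2 / Real.sinh μ ^ 2 := Real.sq_sqrt harg.le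
  have hr0 : 0 < r := Real.sqrt_pos.mpr harg
  have hr1 : r < 1 := by nlinarith [div_pos hμ2 (show (0:ℝ) < Real.sinh μ ^ 2 by positivity)]
  set x : ℝ := (Real.sinh μ / μ) * (1 - r) with hxdef
  have hx0 : 0 < x := by
    apply mul_pos (div_pos hs0 hμ); linarith
  have hkey : Real.sinh μ ^ 2 * (1 - r ^ 2) = μ ^ 2 := by
    rw [hr2]; field_simp; ring
  have hx2 : x ^ 2 * (1 + r) = 1 - r := by
    have hμne : μ ≠ 0 := ne_of_gt hμ
    rw [hxdef]; field_simp
    nlinarith [hkey, show Real.sinh μ ^ 2 * (1 - r ^ 2) * (1 - r) = μ ^ 2 * (1 - r) by rw [hkey]]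
  have hx1 : x < 1 := by nlinarith
  have htcneg : tcstar < 0 := by
    rw [htcs]; exact Real.log_neg hx0 hx1
  have hexp2 : Real.exp (2 * tcstar) = x ^ 2 := by
    rw [two_mul, Real.exp_add, htcs, Real.exp_log hx0, sq]
  set a : ℝ := c * μ ^ 2 with hadef
  have ha0 : 0 < a := by positivity
  have hca : a < -tcstar - r := by
    have h1 : c * μ ^ 2 < cstar * μ ^ 2 := by nlinarith
    rw [hcs, ← htcs] at h1
    have : -(1 / μ ^ 2) * (tcstar + r) * μ ^ 2 = -(tcstar + r) := by
      field_simp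
    nlinarith [h1, this]
  have hH : Real.exp (2 * tcstar) * (tcstar + a - 1) + tcstar + a + 1 < 0 := by
    rw [hexp2]
    nlinarith [mul_pos (show (0:ℝ) < x ^ 2 + 1 by positivity)
      (show (0:ℝ) < -tcstar - r - a by linarith), hx2]
  have hH0 : (0:ℝ) < Real.exp (2 * 0) * (0 + a - 1) + 0 + a + 1 := by
    simp [Real.exp_zero]; linarith
  have hcont : ContinuousOn (fun t : ℝ => Real.exp (2 * t) * (t + a - 1) + t + a + 1)
      (Set.Icc tcstar 0) := by fun_prop
  have hmem : (0:ℝ) ∈ Set.Icc (Real.exp (2 * tcstar) * (tcstar + a - 1) + tcstar + a + 1)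
      (Real.exp (2 * 0) * (0 + a - 1) + 0 + a + 1) := ⟨hH.le, hH0.le⟩
  obtain ⟨s, hs, hfs⟩ := intermediate_value_Icc htcneg.le hcont hmem
  have hstc : s = tc := huniq s (by simpa using hfs)
  have h1 : tcstar ≤ tc := hstc ▸ hs.1
  have h2 : tc ≤ 0 := hstc ▸ hs.2
  have hne1 : tcstar ≠ tc := by
    intro h
    rw [← h] at htc
    exact absurd htc (ne_of_lt hH)
  have hne2 : tc ≠ 0 := by
    intro h
    rw [h] at htc
    exact absurd htc.symm (ne_of_lt hH0)
  have hlt1 : tcstar < tc := lt_of_le_of_ne h1 hne1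
  have hlt2 : tc < 0 := lt_of_le_of_ne h2 hne2
  refine ⟨⟨hlt1, hlt2⟩, ?_, ?_⟩
  · gcongr
  · rw [div_lt_div_iff₀ (by positivity) (by norm_num)]
    linarith
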